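/- arXiv:2507.16440 — 5 statements merged into one kernel-verified Lean document; each statement's English description precedes it below -/
import Mathlib

section
/- Let X be an n × M real matrix with XᵀX invertible, and define the OLS coefficient map β̂(y) = (XᵀX)⁻¹ Xᵀ y for y : Fin n → ℝ. Let K ≥ 2, r : Fin n → Fin K, l̃ : Fin K → ℝ, r̃ i = l̃ (r i), and d_k i = 1 if r i ≤ k else 0. Then β̂(r̃) = (∑_{k=0}^{K−2} (l̃ k − l̃ (k+1)) · β̂(d_k)) + l̃ (K−1) · (XᵀX)⁻¹ Xᵀ 𝟙, where 𝟙 is the all-ones vector in ℝⁿ. -/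
open Matrix

/-- The OLS coefficient map `β̂(y) = (XᵀX)⁻¹ Xᵀ y`. -/
noncomputable def olsCoef {n M : ℕ} (X : Matrix (Fin n) (Fin M) ℝ) (y : Fin n → ℝ) :
    Fin M → ℝ :=
  (Xᵀ * X)⁻¹ *ᵥ (Xᵀ *ᵥ y)

lemma telescope_aux (K : ℕ) (hK : 2 ≤ K) (l : Fin K → ℝ) (j : Fin K) :
    (∑ k : Fin (K - 1),
        (l (Fin.castLE (Nat.sub_le K 1) k) - l (Fin.cast (Nat.sub_add_cancel (Nat.one_le_of_lt hK)) k.succ)) *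
          (if (j : ℕ) ≤ (k : ℕ) then (1 : ℝ) else 0)) =
      l j - l ⟨K - 1, Nat.sub_lt (Nat.zero_lt_of_lt hK) Nat.one_pos⟩ := by
  set f : ℕ → ℝ := fun k => if h : k < K then l ⟨k, h⟩ else 0 with hf
  have hc : ∀ k : Fin (K - 1),
      (l (Fin.castLE (Nat.sub_le K 1) k) - l (Fin.cast (Nat.sub_add_cancel (Nat.one_le_of_lt hK)) k.succ)) *
        (if (j : ℕ) ≤ (k : ℕ) then (1 : ℝ) else 0)
      = if (j : ℕ) ≤ (k : ℕ) then f k - f (k + 1) else 0 := by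
    intro k
    have h1 : (k : ℕ) < K := by omega
    have h2 : (k : ℕ) + 1 < K := by omega
    simp only [hf, dif_pos h1, dif_pos h2]
    by_cases h : (j : ℕ) ≤ (k : ℕ) <;> simp [h, Fin.castLE, Fin.cast, Fin.succ]
  rw [Finset.sum_congr rfl (fun k _ => hc k), Fin.sum_univ_eq_sum_range
    (fun k => if (j : ℕ) ≤ k then f k - f (k + 1) else 0)]
  rw [← Finset.sum_filter]
  have hfil : (Finset.range (K - 1)).filter (fun k => (j : ℕ) ≤ k)
      = Finset.Ico (j : ℕ) (K - 1) := by
    ext x; simp [Finset.mem_Ico, and_comm]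
  rw [hfil]
  have hle : (j : ℕ) ≤ K - 1 := by omega
  rw [Finset.sum_Ico_eq_sub (fun k => f k - f (k + 1)) hle,
    Finset.sum_range_sub' f, Finset.sum_range_sub' f]
  have hj : (j : ℕ) < K := j.isLt
  have hK1 : K - 1 < K := by omega
  simp only [hf, dif_pos hj, dif_pos hK1]
  ring_nf

/-- Decomposition of the OLS coefficient vector of the transformed
outcome `r̃ i = l̃ (r i)` into a weighted sum of the OLS coefficient vectors of the
dichotomizations, plus the top label times the OLS coefficient of the all-ones vector. -/
theorem stmt_1 (n M K : ℕ) (hK : 2 ≤ K)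
    (X : Matrix (Fin n) (Fin M) ℝ) (hX : IsUnit (Xᵀ * X))
    (r : Fin n → Fin K) (l : Fin K → ℝ) :
    olsCoef X (fun i => l (r i)) =
      (∑ k : Fin (K - 1),
        (l (Fin.castLE (by omega) k) - l (Fin.cast (by omega) k.succ)) •
          olsCoef X (fun i => if (r i : ℕ) ≤ (k : ℕ) then (1 : ℝ) else 0)) +
      l ⟨K - 1, by omega⟩ • ((Xᵀ * X)⁻¹ *ᵥ (Xᵀ *ᵥ fun _ => (1 : ℝ))) := by
  have hy : (fun i => l (r i)) =
      (∑ k : Fin (K - 1),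
        (l (Fin.castLE (by omega) k) - l (Fin.cast (by omega) k.succ)) •
          (fun i => if (r i : ℕ) ≤ (k : ℕ) then (1 : ℝ) else 0)) +
      l ⟨K - 1, by omega⟩ • (fun _ => (1 : ℝ)) := by
    funext i
    have := telescope_aux K hK l (r i)
    simp only [Finset.sum_apply, Pi.add_apply, Pi.smul_apply, smul_eq_mul]
    rw [this]; ring
  have key : ∀ y : Fin n → ℝ, olsCoef X y = ((Xᵀ * X)⁻¹ * Xᵀ).mulVecLin y := by
    intro y; simp only [olsCoef, mulVecLin_apply, mulVec_mulVec]
  rw [key, hy, map_add, map_sum, _root_.map_smul]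
  congr 1
  · apply Finset.sum_congr rfl
    intro k _
    rw [_root_.map_smul, key]
  · rw [mulVecLin_apply, mulVec_mulVec]
end

section
/- Let X be an n × M real matrix with XᵀX invertible whose 0-th column is the all-ones vector, let β̂(y) = (XᵀX)⁻¹ Xᵀ y, let K ≥ 2, r : Fin n → Fin K, and d_k i = 1 if r i ≤ k else 0. Fix a coefficient index m ≠ 0 and suppose β̂(d_k)_m ≥ 0 for every k ≤ K−2. Then for every strictly increasing labelling l̃ : Fin K → ℝ, the coefficient β̂(r̃)_m of the transformed outcome r̃ i = l̃ (r i) satisfies β̂(r̃)_m ≤ 0; and if in addition β̂(d_k)_m > 0 for some k, then β̂(r̃)_m < 0 for every strictly increasing l̃. -/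
open Matrix

lemma decomp_aux {K : ℕ} (hK : 2 ≤ K) (l : Fin K → ℝ) (x : Fin K) :
    l x = l ⟨K - 1, by omega⟩ -
      ∑ k : Fin (K - 1), (if (x : ℕ) ≤ (k : ℕ) then
        (l ⟨(k : ℕ) + 1, by have := k.isLt; omega⟩ - l ⟨(k : ℕ), by have := k.isLt; omega⟩)
        else 0) := by
  have hx := x.isLt
  set L : ℕ → ℝ := fun j => if h : j < K then l ⟨j, h⟩ else 0 with hL
  have h1 : ∀ (j : ℕ) (h : j < K), L j = l ⟨j, h⟩ := fun j h => dif_pos h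
  have hsum : ∑ k : Fin (K - 1), (if (x : ℕ) ≤ (k : ℕ) then
        (l ⟨(k : ℕ) + 1, by have := k.isLt; omega⟩ - l ⟨(k : ℕ), by have := k.isLt; omega⟩)
        else 0)
      = ∑ i ∈ Finset.range (K - 1), (if (x : ℕ) ≤ i then L (i + 1) - L i else 0) := by
    rw [← Fin.sum_univ_eq_sum_range (fun i => if (x : ℕ) ≤ i then L (i + 1) - L i else 0)]
    apply Finset.sum_congr rfl
    intro k _
    have hk := k.isLt
    rw [h1 ((k : ℕ) + 1) (by omega), h1 (k : ℕ) (by omega)]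
  rw [hsum, ← Finset.sum_filter]
  have hfil : (Finset.range (K - 1)).filter (fun i => (x : ℕ) ≤ i)
      = Finset.Ico (x : ℕ) (K - 1) := by
    ext i
    simp only [Finset.mem_filter, Finset.mem_range, Finset.mem_Ico]
    omega
  rw [hfil, Finset.sum_Ico_eq_sub _ (by omega : (x : ℕ) ≤ K - 1),
    Finset.sum_range_sub L, Finset.sum_range_sub L,
    h1 (K - 1) (by omega), h1 (x : ℕ) hx]
  ring

/-- non-reversal direction of Proposition 1. If all dichotomized
coefficients `β̂(d_k)_m` are nonnegative, then the coefficient on every strictly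
increasingly transformed outcome is nonpositive; if moreover some dichotomized
coefficient is strictly positive, the transformed coefficient is strictly negative
for every strictly increasing labelling. -/
theorem stmt_3 (n M K : ℕ) [NeZero M] (hK : 2 ≤ K)
    (X : Matrix (Fin n) (Fin M) ℝ) (hX : IsUnit (Xᵀ * X))
    (hcol : X *ᵥ Pi.single (0 : Fin M) 1 = fun _ => (1 : ℝ))
    (r : Fin n → Fin K) (m : Fin M) (hm : m ≠ 0)
    (hpos : ∀ k : Fin (K - 1),
      0 ≤ olsCoef X (fun i => if (r i : ℕ) ≤ (k : ℕ) then (1 : ℝ) else 0) m) :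
    (∀ l : Fin K → ℝ, StrictMono l → olsCoef X (fun i => l (r i)) m ≤ 0) ∧
    ((∃ k : Fin (K - 1),
        0 < olsCoef X (fun i => if (r i : ℕ) ≤ (k : ℕ) then (1 : ℝ) else 0) m) →
      ∀ l : Fin K → ℝ, StrictMono l → olsCoef X (fun i => l (r i)) m < 0) := by
  have hdet : IsUnit (Xᵀ * X).det := (Matrix.isUnit_iff_isUnit_det _).mp hX
  have hinv : (Xᵀ * X)⁻¹ * (Xᵀ * X) = 1 := Matrix.nonsing_inv_mul _ hdet
  set A := (Xᵀ * X)⁻¹ * Xᵀ with hA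
  have hols : ∀ y, olsCoef X y = Matrix.mulVecLin A y := by
    intro y
    rw [olsCoef, Matrix.mulVecLin_apply, hA, Matrix.mulVec_mulVec]
  have hconstm : (Matrix.mulVecLin A (fun _ => (1 : ℝ))) m = 0 := by
    rw [Matrix.mulVecLin_apply, ← hcol, Matrix.mulVec_mulVec]
    have hAX : A * X = 1 := by rw [hA, Matrix.mul_assoc, hinv]
    rw [hAX, Matrix.one_mulVec, Pi.single_eq_of_ne hm]
  -- key identity
  have key : ∀ l : Fin K → ℝ, olsCoef X (fun i => l (r i)) m
      = - ∑ k : Fin (K - 1),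
          (l ⟨(k : ℕ) + 1, by have := k.isLt; omega⟩ - l ⟨(k : ℕ), by have := k.isLt; omega⟩)
          * olsCoef X (fun i => if (r i : ℕ) ≤ (k : ℕ) then (1 : ℝ) else 0) m := by
    intro l
    have hvec : (fun i => l (r i))
        = (l ⟨K - 1, by omega⟩) • (fun _ : Fin n => (1 : ℝ))
          - ∑ k : Fin (K - 1),
            (l ⟨(k : ℕ) + 1, by have := k.isLt; omega⟩ - l ⟨(k : ℕ), by have := k.isLt; omega⟩)
            • (fun i : Fin n => if (r i : ℕ) ≤ (k : ℕ) then (1 : ℝ) else 0) := by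
      funext i
      have := decomp_aux hK l (r i)
      simp only [Pi.sub_apply, Pi.smul_apply, Finset.sum_apply, smul_eq_mul, mul_one,
        mul_ite, mul_zero]
      rw [this]
    rw [hols, hvec]
    simp only [map_sub, _root_.map_smul, map_sum, Pi.sub_apply, Pi.smul_apply,
      Finset.sum_apply, smul_eq_mul, hconstm, mul_zero, zero_sub, neg_inj]
    exact Finset.sum_congr rfl fun k _ => by rw [hols]
  have hsum_nonneg : ∀ l : Fin K → ℝ, StrictMono l →
      ∀ k : Fin (K - 1), (0 : ℝ) ≤
        (l ⟨(k : ℕ) + 1, by have := k.isLt; omega⟩ - l ⟨(k : ℕ), by have := k.isLt; omega⟩)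
          * olsCoef X (fun i => if (r i : ℕ) ≤ (k : ℕ) then (1 : ℝ) else 0) m := by
    intro l hl k
    have hlt : l ⟨(k : ℕ), by have := k.isLt; omega⟩
        < l ⟨(k : ℕ) + 1, by have := k.isLt; omega⟩ := hl (by simp [Fin.lt_def])
    exact mul_nonneg (by linarith) (hpos k)
  constructor
  · intro l hl
    rw [key l]
    simp only [neg_nonpos]
    exact Finset.sum_nonneg fun k _ => hsum_nonneg l hl k
  · rintro ⟨k0, hk0⟩ l hl
    rw [key l]
    have hlt : l ⟨(k0 : ℕ), by have := k0.isLt; omega⟩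
        < l ⟨(k0 : ℕ) + 1, by have := k0.isLt; omega⟩ := hl (by simp [Fin.lt_def])
    have : (0 : ℝ) < ∑ k : Fin (K - 1),
        (l ⟨(k : ℕ) + 1, by have := k.isLt; omega⟩ - l ⟨(k : ℕ), by have := k.isLt; omega⟩)
          * olsCoef X (fun i => if (r i : ℕ) ≤ (k : ℕ) then (1 : ℝ) else 0) m := by
      have hK1 : 0 < K - 1 := by omega
      apply Finset.sum_pos' (fun k _ => hsum_nonneg l hl k)
      exact ⟨k0, Finset.mem_univ _, mul_pos (by linarith) hk0⟩
    linarith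
end

section
/- Let X be an n × M real matrix with XᵀX invertible whose 0-th column is the all-ones vector, let β̂(y) = (XᵀX)⁻¹ Xᵀ y, let K ≥ 2, r : Fin n → Fin K, and d_k i = 1 if r i ≤ k else 0. Fix a coefficient index m ≠ 0 and suppose there exist thresholds k and k′ with β̂(d_k)_m > 0 and β̂(d_{k′})_m < 0. Then there exist strictly increasing labellings l̃⁺ and l̃⁻ : Fin K → ℝ such that the coefficient on the transformed outcome is positive under l̃⁺ and negative under l̃⁻, i.e. β̂(fun i => l̃⁺ (r i))_m > 0 and β̂(fun i => l̃⁻ (r i))_m < 0. -/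
open Matrix

lemma olsCoef_add {n M : ℕ} (X : Matrix (Fin n) (Fin M) ℝ) (y z : Fin n → ℝ) (m : Fin M) :
    olsCoef X (y + z) m = olsCoef X y m + olsCoef X z m := by
  simp [olsCoef, mulVec_add]

lemma olsCoef_smul {n M : ℕ} (X : Matrix (Fin n) (Fin M) ℝ) (c : ℝ) (y : Fin n → ℝ) (m : Fin M) :
    olsCoef X (c • y) m = c * olsCoef X y m := by
  simp [olsCoef, mulVec_smul]

lemma olsCoef_neg {n M : ℕ} (X : Matrix (Fin n) (Fin M) ℝ) (y : Fin n → ℝ) (m : Fin M) :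
    olsCoef X (-y) m = -olsCoef X y m := by
  simp [olsCoef, mulVec_neg]

/-- reversibility direction of Proposition 1. If the dichotomized
coefficients take both signs, then there exist strictly increasing labellings making
the coefficient on the transformed outcome positive, respectively negative. -/
theorem stmt_4 (n M K : ℕ) [NeZero M] (hK : 2 ≤ K)
    (X : Matrix (Fin n) (Fin M) ℝ) (hX : IsUnit (Xᵀ * X))
    (hcol : X *ᵥ Pi.single (0 : Fin M) 1 = fun _ => (1 : ℝ))
    (r : Fin n → Fin K) (m : Fin M) (hm : m ≠ 0)
    (k k' : Fin (K - 1))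
    (hpos : 0 < olsCoef X (fun i => if (r i : ℕ) ≤ (k : ℕ) then (1 : ℝ) else 0) m)
    (hneg : olsCoef X (fun i => if (r i : ℕ) ≤ (k' : ℕ) then (1 : ℝ) else 0) m < 0) :
    ∃ lplus lminus : Fin K → ℝ, StrictMono lplus ∧ StrictMono lminus ∧
      0 < olsCoef X (fun i => lplus (r i)) m ∧
      olsCoef X (fun i => lminus (r i)) m < 0 := by
  set c := olsCoef X (fun i => ((r i : ℕ) : ℝ)) m with hc
  set a := olsCoef X (fun i => if (r i : ℕ) ≤ (k : ℕ) then (1 : ℝ) else 0) m with ha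
  set b := olsCoef X (fun i => if (r i : ℕ) ≤ (k' : ℕ) then (1 : ℝ) else 0) m with hb
  have hcpos : (0:ℝ) < |c| + 1 := by positivity
  set ε₁ : ℝ := a / (2 * (|c| + 1)) with hε₁
  set ε₂ : ℝ := (-b) / (2 * (|c| + 1)) with hε₂
  have hε₁pos : 0 < ε₁ := by positivity
  have hε₂pos : 0 < ε₂ := div_pos (by linarith) (by linarith)
  refine ⟨fun j => (if (j : ℕ) ≤ (k' : ℕ) then (-1 : ℝ) else 0) + ε₂ * (j : ℕ),
          fun j => (if (j : ℕ) ≤ (k : ℕ) then (-1 : ℝ) else 0) + ε₁ * (j : ℕ),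
          ?_, ?_, ?_, ?_⟩
  · intro j j' hjj'
    dsimp only
    have hnat : (j : ℕ) < (j' : ℕ) := hjj'
    have h1 : (if (j : ℕ) ≤ (k' : ℕ) then (-1 : ℝ) else 0) ≤
        (if (j' : ℕ) ≤ (k' : ℕ) then (-1 : ℝ) else 0) := by
      by_cases hj' : (j' : ℕ) ≤ (k' : ℕ)
      · have hj : (j : ℕ) ≤ (k' : ℕ) := le_trans hnat.le hj'
        simp [hj, hj']
      · split_ifs <;> norm_num
    have h2 : ε₂ * (j : ℕ) < ε₂ * (j' : ℕ) := by
      apply mul_lt_mul_of_pos_left _ hε₂pos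
      exact_mod_cast hnat
    linarith
  · intro j j' hjj'
    dsimp only
    have hnat : (j : ℕ) < (j' : ℕ) := hjj'
    have h1 : (if (j : ℕ) ≤ (k : ℕ) then (-1 : ℝ) else 0) ≤
        (if (j' : ℕ) ≤ (k : ℕ) then (-1 : ℝ) else 0) := by
      by_cases hj' : (j' : ℕ) ≤ (k : ℕ)
      · have hj : (j : ℕ) ≤ (k : ℕ) := le_trans hnat.le hj'
        simp [hj, hj']
      · split_ifs <;> norm_num
    have h2 : ε₁ * (j : ℕ) < ε₁ * (j' : ℕ) := by
      apply mul_lt_mul_of_pos_left _ hε₁pos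
      exact_mod_cast hnat
    linarith
  · have hdecomp : (fun i => (if ((r i : ℕ)) ≤ (k' : ℕ) then (-1 : ℝ) else 0) + ε₂ * (r i : ℕ))
        = (-(fun i => if (r i : ℕ) ≤ (k' : ℕ) then (1 : ℝ) else 0))
          + ε₂ • (fun i => ((r i : ℕ) : ℝ)) := by
      funext i
      simp only [Pi.add_apply, Pi.neg_apply, Pi.smul_apply, smul_eq_mul]
      split_ifs <;> ring
    rw [hdecomp, olsCoef_add, olsCoef_neg, olsCoef_smul, ← hb, ← hc]
    have e2 : ε₂ * (|c| + 1) = -b / 2 := by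
      rw [hε₂]; field_simp
    have habs' : -(|c| + 1) ≤ c := by linarith [neg_abs_le c]
    have hmul : ε₂ * (-(|c| + 1)) ≤ ε₂ * c := mul_le_mul_of_nonneg_left habs' hε₂pos.le
    nlinarith
  · have hdecomp : (fun i => (if ((r i : ℕ)) ≤ (k : ℕ) then (-1 : ℝ) else 0) + ε₁ * (r i : ℕ))
        = (-(fun i => if (r i : ℕ) ≤ (k : ℕ) then (1 : ℝ) else 0))
          + ε₁ • (fun i => ((r i : ℕ) : ℝ)) := by
      funext i
      simp only [Pi.add_apply, Pi.neg_apply, Pi.smul_apply, smul_eq_mul]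
      split_ifs <;> ring
    rw [hdecomp, olsCoef_add, olsCoef_neg, olsCoef_smul, ← ha, ← hc]
    have e1 : ε₁ * (|c| + 1) = a / 2 := by
      rw [hε₁]; field_simp
    have habs : c ≤ |c| + 1 := by linarith [le_abs_self c]
    have hmul : ε₁ * c ≤ ε₁ * (|c| + 1) := mul_le_mul_of_nonneg_left habs hε₁pos.le
    linarith
end

section
/- Let K ≥ 3 and L > 0, and let d : Fin (K−1) → ℝ be the vector with d 0 = L and d k = 0 for all k ≠ 0. Then d satisfies d k ≥ 0 for every k and ∑_k d k = L, and its variance attains the maximal value: (1/(K−1)) · ∑_k (d k − L/(K−1))² = ((K−2)/(K−1)²) · L². Consequently, the maximum of the variance over all nonnegative vectors in Fin (K−1) → ℝ summing to L equals ((K−2)/(K−1)²) · L². -/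
private lemma sum_sq_expand (n : ℕ) (e : Fin n → ℝ) (m : ℝ) :
    ∑ k, (e k - m) ^ 2 = (∑ k, e k ^ 2) - 2 * m * (∑ k, e k) + n * m ^ 2 := by
  have : ∀ k : Fin n, (e k - m) ^ 2 = e k ^ 2 - 2 * m * e k + m ^ 2 := by
    intro k; ring
  simp only [this, Finset.sum_add_distrib, Finset.sum_sub_distrib, Finset.sum_const,
    Finset.card_univ, Fintype.card_fin, ← Finset.mul_sum, nsmul_eq_mul]

/-- the single-jump configuration attains the maximal variance.
For `K ≥ 3` and `L > 0`, the vector with `d 0 = L` and all other entries `0` is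
nonnegative, sums to `L`, and attains variance `((K−2)/(K−1)²) L²`; consequently
this value is the maximum of the variance over all nonnegative vectors summing
to `L`. -/
theorem stmt_13 (K : ℕ) (hK : 3 ≤ K) (L : ℝ) (hL : 0 < L)
    (d : Fin (K - 1) → ℝ) (hdef : d = fun k : Fin (K - 1) => if (k : ℕ) = 0 then L else 0) :
    (∀ k, 0 ≤ d k) ∧ (∑ k, d k = L) ∧
    ((1 / ((K : ℝ) - 1)) * ∑ k, (d k - L / ((K : ℝ) - 1)) ^ 2 =
      (((K : ℝ) - 2) / ((K : ℝ) - 1) ^ 2) * L ^ 2) ∧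
    IsGreatest
      {v : ℝ | ∃ e : Fin (K - 1) → ℝ, (∀ k, 0 ≤ e k) ∧ (∑ k, e k = L) ∧
        v = (1 / ((K : ℝ) - 1)) * ∑ k, (e k - L / ((K : ℝ) - 1)) ^ 2}
      ((((K : ℝ) - 2) / ((K : ℝ) - 1) ^ 2) * L ^ 2) := by
  have hn : 2 ≤ K - 1 := by omega
  have hcast : ((K - 1 : ℕ) : ℝ) = (K : ℝ) - 1 := by
    have : (1 : ℕ) ≤ K := by omega
    push_cast [Nat.cast_sub this]; ring
  set c : ℝ := (K : ℝ) - 1 with hc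
  have hc2 : (2 : ℝ) ≤ c := by
    rw [hc]; have : (3 : ℝ) ≤ (K : ℝ) := by exact_mod_cast hK
    linarith
  have hcpos : 0 < c := by linarith
  have hcne : c ≠ 0 := ne_of_gt hcpos
  set m : ℝ := L / c with hm
  have hzero : (0 : ℕ) < K - 1 := by omega
  -- sum of d
  have hsum : ∑ k, d k = L := by
    rw [hdef]
    rw [Finset.sum_eq_single (⟨0, hzero⟩ : Fin (K - 1))]
    · simp
    · intro b _ hb
      simp only [ite_eq_right_iff]
      intro hb0
      exact absurd (Fin.ext hb0 : b = ⟨0, hzero⟩) hb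
    · simp
  -- sum of squares of d
  have hsumsq : ∑ k, d k ^ 2 = L ^ 2 := by
    rw [hdef]
    rw [Finset.sum_eq_single (⟨0, hzero⟩ : Fin (K - 1))]
    · simp
    · intro b _ hb
      simp only [ne_eq]
      have : ¬ (b : ℕ) = 0 := fun hb0 => hb (Fin.ext hb0)
      simp [this]
    · simp
  have hnonneg : ∀ k, 0 ≤ d k := by
    intro k; rw [hdef]; dsimp only; split
    · exact hL.le
    · exact le_refl 0
  -- variance of d
  have hvar : (1 / c) * ∑ k, (d k - m) ^ 2 = ((K : ℝ) - 2) / c ^ 2 * L ^ 2 := by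
    rw [sum_sq_expand, hsum, hsumsq, hcast, hm]
    have : (K : ℝ) - 2 = c - 1 := by rw [hc]; ring
    rw [this]
    field_simp
    ring
  refine ⟨hnonneg, hsum, hvar, ⟨d, hnonneg, hsum, hvar.symm⟩, ?_⟩
  rintro v ⟨e, he0, hes, rfl⟩
  -- upper bound
  have hle : ∀ k, e k ≤ L := by
    intro k
    rw [← hes]
    exact Finset.single_le_sum (fun i _ => he0 i) (Finset.mem_univ k)
  have hsq : ∑ k, e k ^ 2 ≤ L ^ 2 := by
    calc ∑ k, e k ^ 2 ≤ ∑ k, e k * L := by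
          apply Finset.sum_le_sum
          intro k _
          rw [sq]
          exact mul_le_mul_of_nonneg_left (hle k) (he0 k)
      _ = L ^ 2 := by rw [← Finset.sum_mul, hes]; ring
  have hkey : ∑ k, (e k - m) ^ 2 ≤ L ^ 2 - L ^ 2 / c := by
    rw [sum_sq_expand, hes, hcast, hm]
    have : 2 * (L / c) * L - c * (L / c) ^ 2 = L ^ 2 / c := by
      field_simp; ring
    nlinarith [hsq]
  have htarget : ((K : ℝ) - 2) / c ^ 2 * L ^ 2 = (1 / c) * (L ^ 2 - L ^ 2 / c) := by
    have : (K : ℝ) - 2 = c - 1 := by rw [hc]; ring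
    rw [this]; field_simp
  rw [htarget]
  apply mul_le_mul_of_nonneg_left hkey
  positivity
end

section
/- Let a < b be real numbers and let g : ℝ → ℝ be continuous on [a, b]. Suppose there exist t₀, t₁ ∈ [a, b] with g(t₀) > 0 and g(t₁) < 0. Then there exist functions f₊ and f₋ : ℝ → ℝ, each continuously differentiable on [a, b] with strictly positive derivative on [a, b], such that ∫_a^b f₊′(t) · g(t) dt > 0 and ∫_a^b f₋′(t) · g(t) dt < 0. -/
open intervalIntegral Set

lemma key16 (a b : ℝ) (hab : a < b) (g : ℝ → ℝ)
    (hg : ContinuousOn g (Set.Icc a b))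
    (t₀ : ℝ) (ht₀ : t₀ ∈ Set.Icc a b) (hpos : 0 < g t₀) :
    ∃ f f' : ℝ → ℝ,
      (∀ t ∈ Set.Icc a b, HasDerivAt f (f' t) t) ∧
      ContinuousOn f' (Set.Icc a b) ∧
      (∀ t ∈ Set.Icc a b, 0 < f' t) ∧
      0 < ∫ t in a..b, f' t * g t := by
  obtain ⟨δ, hδ, hball⟩ := Metric.continuousWithinAt_iff.mp (hg t₀ ht₀) (g t₀ / 2) (by linarith)
  have hgt : ∀ t ∈ Set.Icc a b, |t - t₀| < δ → g t₀ / 2 < g t := by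
    intro t ht hd
    have h1 := hball ht (by simpa [Real.dist_eq] using hd)
    rw [Real.dist_eq] at h1
    have h2 := (abs_lt.mp h1).1
    linarith
  set u := max a (t₀ - δ/2) with hu
  set v := min b (t₀ + δ/2) with hv
  have hau : a ≤ u := le_max_left _ _
  have hvb : v ≤ b := min_le_left _ _
  have hut : u ≤ t₀ := max_le ht₀.1 (by linarith)
  have htv : t₀ ≤ v := le_min ht₀.2 (by linarith)
  have huv : u < v := by
    rcases lt_or_eq_of_le ht₀.1 with h | h
    · exact lt_of_lt_of_le (max_lt h (by linarith)) htv
    · exact lt_of_le_of_lt hut (lt_min (h ▸ hab) (by linarith))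
  have hsub : Set.Icc u v ⊆ Set.Icc a b := Set.Icc_subset_Icc hau hvb
  have hgpos : ∀ t ∈ Set.Icc u v, 0 < g t := by
    intro t ht
    have hle1 : t₀ - δ/2 ≤ u := le_max_right _ _
    have hle2 : v ≤ t₀ + δ/2 := min_le_right _ _
    have h1 : |t - t₀| < δ := by
      rw [abs_lt]; constructor <;> [linarith [ht.1]; linarith [ht.2]]
    linarith [hgt t (hsub ht) h1]
  set φ : ℝ → ℝ := fun t => max 0 ((t - u) * (v - t)) with hφdef
  have hφc : Continuous φ := continuous_const.max (by continuity)
  have hφ0 : ∀ t, 0 ≤ φ t := fun t => le_max_left _ _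
  have hφz : ∀ t, t ≤ u ∨ v ≤ t → φ t = 0 := by
    intro t ht
    apply max_eq_left
    rcases ht with h | h
    · nlinarith
    · nlinarith
  have hφpos : ∀ t ∈ Set.Ioo u v, 0 < φ t := by
    intro t ht
    have h : 0 < (t - u) * (v - t) := mul_pos (by linarith [ht.1]) (by linarith [ht.2])
    exact lt_max_iff.mpr (Or.inr h)
  -- integrability
  have hgiAB : ContinuousOn (fun t => φ t * g t) (Set.Icc a b) :=
    hφc.continuousOn.mul hg
  have hIab : IntervalIntegrable (fun t => φ t * g t) MeasureTheory.volume a b :=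
    (hgiAB.mono (by rw [Set.uIcc_of_le hab.le])).intervalIntegrable
  have hIau : IntervalIntegrable (fun t => φ t * g t) MeasureTheory.volume a u :=
    (hgiAB.mono (by rw [Set.uIcc_of_le hau]; exact Set.Icc_subset_Icc le_rfl (le_trans hut ht₀.2))).intervalIntegrable
  have hIuv : IntervalIntegrable (fun t => φ t * g t) MeasureTheory.volume u v :=
    (hgiAB.mono (by rw [Set.uIcc_of_le huv.le]; exact hsub)).intervalIntegrable
  have hIvb : IntervalIntegrable (fun t => φ t * g t) MeasureTheory.volume v b :=
    (hgiAB.mono (by rw [Set.uIcc_of_le hvb]; exact Set.Icc_subset_Icc (le_trans hau huv.le) le_rfl)).intervalIntegrable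
  have hJint : IntervalIntegrable g MeasureTheory.volume a b :=
    (hg.mono (by rw [Set.uIcc_of_le hab.le])).intervalIntegrable
  -- I = ∫ u..v, positive
  set I := ∫ t in u..v, φ t * g t with hIdef
  have hIpos : 0 < I := by
    apply intervalIntegral_pos_of_pos_on hIuv _ huv
    intro x hx
    exact mul_pos (hφpos x hx) (hgpos x (Set.Ioo_subset_Icc_self hx))
  -- ∫ a..b φ g = I
  have hzero1 : (∫ t in a..u, φ t * g t) = 0 := by
    rw [intervalIntegral.integral_congr (g := fun _ => (0:ℝ))]
    · simp
    · intro t ht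
      rw [Set.uIcc_of_le hau] at ht
      simp [hφz t (Or.inl ht.2)]
  have hzero2 : (∫ t in v..b, φ t * g t) = 0 := by
    rw [intervalIntegral.integral_congr (g := fun _ => (0:ℝ))]
    · simp
    · intro t ht
      rw [Set.uIcc_of_le hvb] at ht
      simp [hφz t (Or.inr ht.1)]
  have hsplit : (∫ t in a..b, φ t * g t) = I := by
    rw [← intervalIntegral.integral_add_adjacent_intervals hIau (hIuv.trans hIvb),
        ← intervalIntegral.integral_add_adjacent_intervals hIuv hIvb,
        hzero1, hzero2]
    ring
  set J := ∫ t in a..b, g t with hJdef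
  set ε := I / (2 * (|J| + 1)) with hεdef
  have hJ0 : (0:ℝ) ≤ |J| := abs_nonneg _
  have hε : 0 < ε := div_pos hIpos (by positivity)
  have hεJ : ε * (|J| + 1) = I / 2 := by
    rw [hεdef]; field_simp
  -- define f' and f
  refine ⟨fun x => ∫ t in (0:ℝ)..x, (ε + φ t), fun t => ε + φ t, ?_, ?_, ?_, ?_⟩
  · intro t _
    exact ((continuous_const.add hφc).integral_hasStrictDerivAt 0 t).hasDerivAt
  · exact (continuous_const.add hφc).continuousOn
  · intro t _
    have := hφ0 t; show 0 < ε + φ t; linarith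
  · have hcongr : (∫ t in a..b, (ε + φ t) * g t) = ε * J + I := by
      rw [show (fun t => (ε + φ t) * g t) = fun t => ε * g t + φ t * g t by
          funext t; ring]
      rw [intervalIntegral.integral_add (hJint.const_mul ε) hIab,
          intervalIntegral.integral_const_mul, hsplit]
    rw [hcongr]
    have h1 : -|J| ≤ J := neg_abs_le J
    nlinarith
/-- converse direction of Proposition A1, continuous outcomes.
If the continuous function `g` takes both strict signs on `[a, b]`, then there are
continuously differentiable transformations with strictly positive derivative on
`[a, b]` making the weighted integral `∫_a^b f'(t) g(t) dt` positive, respectively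
negative. -/
theorem stmt_16 (a b : ℝ) (hab : a < b) (g : ℝ → ℝ)
    (hg : ContinuousOn g (Set.Icc a b))
    (t₀ t₁ : ℝ) (ht₀ : t₀ ∈ Set.Icc a b) (ht₁ : t₁ ∈ Set.Icc a b)
    (hpos : 0 < g t₀) (hneg : g t₁ < 0) :
    ∃ fplus fplus' fminus fminus' : ℝ → ℝ,
      (∀ t ∈ Set.Icc a b, HasDerivAt fplus (fplus' t) t) ∧
      ContinuousOn fplus' (Set.Icc a b) ∧
      (∀ t ∈ Set.Icc a b, 0 < fplus' t) ∧
      (∀ t ∈ Set.Icc a b, HasDerivAt fminus (fminus' t) t) ∧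
      ContinuousOn fminus' (Set.Icc a b) ∧
      (∀ t ∈ Set.Icc a b, 0 < fminus' t) ∧
      (0 < ∫ t in a..b, fplus' t * g t) ∧
      (∫ t in a..b, fminus' t * g t) < 0 := by
  obtain ⟨fp, fp', h1, h2, h3, h4⟩ := key16 a b hab g hg t₀ ht₀ hpos
  obtain ⟨fm, fm', h5, h6, h7, h8⟩ := key16 a b hab (fun t => -g t) (hg.neg) t₁ ht₁ (by simpa using hneg)
  refine ⟨fp, fp', fm, fm', h1, h2, h3, h5, h6, h7, h4, ?_⟩
  have : (∫ t in a..b, fm' t * (-g t)) = -∫ t in a..b, fm' t * g t := by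
    rw [← intervalIntegral.integral_neg]
    congr 1; funext t; ring
  rw [this] at h8
  linarith
end
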